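/- arXiv:1705.09632 — 2 statements merged into one kernel-verified Lean document; each statement's English description precedes it below -/
import Mathlib

section
/- For every x ∈ ℝ³ and every direction v ∈ ℝ³, H(x)⁻¹·DH(x)[v] = (2iℓ/(ℓ² + r²))·G(x)⁻¹·(v·τ)·G(x). (This expresses that the pull-back by H of the left-invariant frame of SU(2) is the flat frame of ℝ³ rotated by G, reflected, and rescaled by Ω(x) = (ℓ² + r²)/(4ℓ).) -/
open Matrix Complex

noncomputable section

attribute [local instance] Matrix.normedAddCommGroup Matrix.normedSpace

/-- The Pauli matrices τ₁, τ₂, τ₃. -/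
def pauli : Fin 3 → Matrix (Fin 2) (Fin 2) ℂ :=
  ![!![0, 1; 1, 0], !![0, -I; I, 0], !![1, 0; 0, -1]]

/-- The Pauli vector x·τ = x₁τ₁ + x₂τ₂ + x₃τ₃ for x ∈ ℝ³. -/
def pauliVec (x : EuclideanSpace ℝ (Fin 3)) : Matrix (Fin 2) (Fin 2) ℂ :=
  (x 0 : ℂ) • pauli 0 + (x 1 : ℂ) • pauli 1 + (x 2 : ℂ) • pauli 2

/-- G(x) = (ℓ·I + i x·τ)/√(ℓ² + r²), the inverse gnomonic projection. -/
def Gmap (ℓ : ℝ) (x : EuclideanSpace ℝ (Fin 3)) : Matrix (Fin 2) (Fin 2) ℂ :=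
  (((Real.sqrt (ℓ ^ 2 + ‖x‖ ^ 2))⁻¹ : ℝ) : ℂ) •
    ((ℓ : ℂ) • (1 : Matrix (Fin 2) (Fin 2) ℂ) + I • pauliVec x)

/-- H(x) = ((ℓ² − r²)·I + 2iℓ x·τ)/(ℓ² + r²), the inverse stereographic projection. -/
def Hmap (ℓ : ℝ) (x : EuclideanSpace ℝ (Fin 3)) : Matrix (Fin 2) (Fin 2) ℂ :=
  ((((ℓ ^ 2 + ‖x‖ ^ 2))⁻¹ : ℝ) : ℂ) •
    (((ℓ ^ 2 - ‖x‖ ^ 2 : ℝ) : ℂ) • (1 : Matrix (Fin 2) (Fin 2) ℂ)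
      + ((2 * ℓ : ℝ) : ℂ) • I • pauliVec x)

-- auxiliary: pauliVec as a linear map
def pauliVecL : EuclideanSpace ℝ (Fin 3) →ₗ[ℝ] Matrix (Fin 2) (Fin 2) ℂ where
  toFun := pauliVec
  map_add' x y := by
    simp only [pauliVec, PiLp.add_apply, ofReal_add]
    module
  map_smul' c x := by
    simp only [pauliVec, PiLp.smul_apply, smul_eq_mul, ofReal_mul, RingHom.id_apply]
    simp only [mul_smul, Complex.coe_smul]
    module

def pauliVecCLM : EuclideanSpace ℝ (Fin 3) →L[ℝ] Matrix (Fin 2) (Fin 2) ℂ :=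
  LinearMap.toContinuousLinearMap pauliVecL

lemma norm_sq_coords (x : EuclideanSpace ℝ (Fin 3)) :
    ‖x‖ ^ 2 = x 0 ^ 2 + x 1 ^ 2 + x 2 ^ 2 := by
  rw [← real_inner_self_eq_norm_sq, PiLp.inner_apply]
  simp [Fin.sum_univ_three, sq]

lemma inner_coords (x v : EuclideanSpace ℝ (Fin 3)) :
    (inner ℝ x v : ℝ) = x 0 * v 0 + x 1 * v 1 + x 2 * v 2 := by
  rw [PiLp.inner_apply]
  simp [Fin.sum_univ_three]
  ring

private lemma fderiv_Hmap_apply (ℓ : ℝ) (hℓ : 0 < ℓ) (x v : EuclideanSpace ℝ (Fin 3)) :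
    fderiv ℝ (Hmap ℓ) x v =
      (((ℓ ^ 2 + ‖x‖ ^ 2)⁻¹ : ℝ) : ℂ) •
        (((-(2 * (inner ℝ x v : ℝ)) : ℝ) : ℂ) • (1 : Matrix (Fin 2) (Fin 2) ℂ)
          + ((2 * ℓ : ℝ) : ℂ) • I • pauliVec v)
      + (((-(2 * (inner ℝ x v : ℝ)) * ((ℓ ^ 2 + ‖x‖ ^ 2) ^ 2)⁻¹ : ℝ) : ℂ) •
        (((ℓ ^ 2 - ‖x‖ ^ 2 : ℝ) : ℂ) • (1 : Matrix (Fin 2) (Fin 2) ℂ)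
          + ((2 * ℓ : ℝ) : ℂ) • I • pauliVec x)) := by
  have hd : (ℓ ^ 2 + ‖x‖ ^ 2) ≠ 0 := by positivity
  have hn := (hasStrictFDerivAt_norm_sq x).hasFDerivAt
  have h1 := hn.const_add (ℓ ^ 2)
  have h2 := (hasFDerivAt_inv hd).comp x h1
  have h3 := Complex.ofRealCLM.hasFDerivAt.comp x h2
  have hs := (hn.const_sub (ℓ ^ 2))
  have h4 := (Complex.ofRealCLM.hasFDerivAt.comp x hs).smul_const
    (1 : Matrix (Fin 2) (Fin 2) ℂ)
  have hQ : HasFDerivAt pauliVec pauliVecCLM x := pauliVecCLM.hasFDerivAt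
  have h5 := ((hQ.const_smul I).const_smul (((2 * ℓ : ℝ) : ℂ)))
  have hN := h4.add h5
  have hH' := h3.smul hN
  have hH : HasFDerivAt (Hmap ℓ) _ x := hH'
  have hv : fderiv ℝ (Hmap ℓ) x v =
      (((ℓ ^ 2 + ‖x‖ ^ 2)⁻¹ : ℝ) : ℂ) •
        ((((-(2 • innerSL ℝ x)) v : ℝ) : ℂ) • (1 : Matrix (Fin 2) (Fin 2) ℂ)
          + ((2 * ℓ : ℝ) : ℂ) • I • pauliVec v)
      + ((((2 • innerSL ℝ x) v • -(((ℓ ^ 2 + ‖x‖ ^ 2) ^ 2)⁻¹) : ℝ)) : ℂ) •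
        (((ℓ ^ 2 - ‖x‖ ^ 2 : ℝ) : ℂ) • (1 : Matrix (Fin 2) (Fin 2) ℂ)
          + ((2 * ℓ : ℝ) : ℂ) • I • pauliVec x) := by
    rw [hH.fderiv]; rfl
  rw [hv]
  simp only [ContinuousLinearMap.add_apply, ContinuousLinearMap.smul_apply,
    ContinuousLinearMap.smulRight_apply, ContinuousLinearMap.comp_apply,
    ContinuousLinearMap.coe_smul', Pi.smul_apply, ContinuousLinearMap.one_apply,
    ContinuousLinearMap.coe_comp', Function.comp_apply, Complex.ofRealCLM_apply,
    ContinuousLinearMap.smul_apply, ContinuousLinearMap.neg_apply, two_smul,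
    innerSL_apply_apply, pauliVecCLM, LinearMap.coe_toContinuousLinearMap',
    pauliVecL, LinearMap.coe_mk, AddHom.coe_mk]
  have e1 : -((inner ℝ x v : ℝ) + inner ℝ x v) = -(2 * (inner ℝ x v : ℝ)) := by ring
  have e2 : (((inner ℝ x v : ℝ) + inner ℝ x v) • -(((ℓ ^ 2 + ‖x‖ ^ 2) ^ 2)⁻¹) : ℝ)
      = -(2 * (inner ℝ x v : ℝ)) * ((ℓ ^ 2 + ‖x‖ ^ 2) ^ 2)⁻¹ := by
    rw [smul_eq_mul]; ring
  rw [e1, e2]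


lemma pauli_anticomm (x y : EuclideanSpace ℝ (Fin 3)) :
    pauliVec x * pauliVec y + pauliVec y * pauliVec x
      = ((2 * (x 0 * y 0 + x 1 * y 1 + x 2 * y 2) : ℝ) : ℂ) • 1 := by
  ext i j
  fin_cases i <;> fin_cases j <;>
    simp [pauliVec, pauli, Matrix.mul_apply, Fin.sum_univ_succ, Matrix.one_apply] <;>
    ring_nf <;>
    simp [Complex.ext_iff] <;>
    ring

lemma pauliVec_sq (x : EuclideanSpace ℝ (Fin 3)) :
    pauliVec x * pauliVec x = ((‖x‖ ^ 2 : ℝ) : ℂ) • 1 := by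
  rw [norm_sq_coords]
  ext i j
  fin_cases i <;> fin_cases j <;>
    simp [pauliVec, pauli, Matrix.mul_apply, Fin.sum_univ_succ, Matrix.one_apply] <;>
    ring_nf <;>
    simp [Complex.ext_iff] <;>
    (try ring) <;>
    try exact ⟨trivial, trivial⟩

lemma anticomm' (x v : EuclideanSpace ℝ (Fin 3)) :
    pauliVec v * pauliVec x
      = ((2 * (inner ℝ x v : ℝ) : ℝ) : ℂ) • 1 - pauliVec x * pauliVec v := by
  have h := pauli_anticomm x v
  rw [inner_coords]
  rw [eq_sub_iff_add_eq, add_comm]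
  exact h

lemma GG (ℓ : ℝ) (x : EuclideanSpace ℝ (Fin 3)) :
    ((ℓ:ℂ) • (1 : Matrix (Fin 2) (Fin 2) ℂ) + I • pauliVec x) *
      ((ℓ:ℂ) • (1 : Matrix (Fin 2) (Fin 2) ℂ) - I • pauliVec x)
      = ((ℓ ^ 2 + ‖x‖ ^ 2 : ℝ) : ℂ) • 1 := by
  simp only [add_mul, mul_add, sub_mul, mul_sub, smul_mul_assoc, mul_smul_comm,
    smul_smul, mul_one, one_mul, smul_add, smul_sub, pauliVec_sq]
  match_scalars <;>
    · push_cast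
      ring_nf
      try simp only [Complex.I_sq]
      try push_cast
      try ring_nf

lemma HH (ℓ : ℝ) (x : EuclideanSpace ℝ (Fin 3)) :
    (((ℓ ^ 2 - ‖x‖ ^ 2 : ℝ) : ℂ) • (1 : Matrix (Fin 2) (Fin 2) ℂ)
        + ((2 * ℓ : ℝ) : ℂ) • I • pauliVec x) *
      (((ℓ ^ 2 - ‖x‖ ^ 2 : ℝ) : ℂ) • (1 : Matrix (Fin 2) (Fin 2) ℂ)
        - ((2 * ℓ : ℝ) : ℂ) • I • pauliVec x)
      = (((ℓ ^ 2 + ‖x‖ ^ 2) ^ 2 : ℝ) : ℂ) • 1 := by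
  simp only [add_mul, mul_add, sub_mul, mul_sub, smul_mul_assoc, mul_smul_comm,
    smul_smul, mul_one, one_mul, smul_add, smul_sub, pauliVec_sq]
  match_scalars <;>
    · push_cast
      ring_nf
      try simp only [Complex.I_sq]
      try push_cast
      try ring_nf

lemma Hinv (ℓ : ℝ) (hℓ : 0 < ℓ) (x : EuclideanSpace ℝ (Fin 3)) :
    (Hmap ℓ x)⁻¹ = ((((ℓ ^ 2 + ‖x‖ ^ 2))⁻¹ : ℝ) : ℂ) •
      (((ℓ ^ 2 - ‖x‖ ^ 2 : ℝ) : ℂ) • (1 : Matrix (Fin 2) (Fin 2) ℂ)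
        - ((2 * ℓ : ℝ) : ℂ) • I • pauliVec x) := by
  have hd : (ℓ ^ 2 + ‖x‖ ^ 2) ≠ 0 := by positivity
  apply Matrix.inv_eq_right_inv
  rw [Hmap, smul_mul_assoc, mul_smul_comm, smul_smul, HH, smul_smul]
  rw [show (((ℓ ^ 2 + ‖x‖ ^ 2)⁻¹ : ℝ) : ℂ) * (((ℓ ^ 2 + ‖x‖ ^ 2)⁻¹ : ℝ) : ℂ) *
      ((((ℓ ^ 2 + ‖x‖ ^ 2) ^ 2 : ℝ)) : ℂ) = 1 by
    rw [← ofReal_mul, ← ofReal_mul, ← ofReal_one]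
    congr 1
    field_simp]
  rw [one_smul]

lemma Ginv (ℓ : ℝ) (hℓ : 0 < ℓ) (x : EuclideanSpace ℝ (Fin 3)) :
    (Gmap ℓ x)⁻¹ = (((Real.sqrt (ℓ ^ 2 + ‖x‖ ^ 2))⁻¹ : ℝ) : ℂ) •
      ((ℓ : ℂ) • (1 : Matrix (Fin 2) (Fin 2) ℂ) - I • pauliVec x) := by
  have hd : (0:ℝ) < ℓ ^ 2 + ‖x‖ ^ 2 := by positivity
  apply Matrix.inv_eq_right_inv
  rw [Gmap, smul_mul_assoc, mul_smul_comm, smul_smul, GG, smul_smul]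
  rw [show (((Real.sqrt (ℓ ^ 2 + ‖x‖ ^ 2))⁻¹ : ℝ) : ℂ) *
      (((Real.sqrt (ℓ ^ 2 + ‖x‖ ^ 2))⁻¹ : ℝ) : ℂ) * (((ℓ ^ 2 + ‖x‖ ^ 2) : ℝ) : ℂ) = 1 by
    rw [← ofReal_mul, ← ofReal_mul, ← ofReal_one]
    congr 1
    rw [← mul_inv, Real.mul_self_sqrt hd.le]
    field_simp]
  rw [one_smul]

lemma Gconj (ℓ : ℝ) (hℓ : 0 < ℓ) (x v : EuclideanSpace ℝ (Fin 3)) :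
    (Gmap ℓ x)⁻¹ * pauliVec v * Gmap ℓ x
      = ((((ℓ ^ 2 + ‖x‖ ^ 2))⁻¹ : ℝ) : ℂ) •
        (((ℓ : ℂ) • (1 : Matrix (Fin 2) (Fin 2) ℂ) - I • pauliVec x) * pauliVec v *
          ((ℓ : ℂ) • (1 : Matrix (Fin 2) (Fin 2) ℂ) + I • pauliVec x)) := by
  have hd : (0:ℝ) < ℓ ^ 2 + ‖x‖ ^ 2 := by positivity
  rw [Ginv ℓ hℓ x, Gmap, smul_mul_assoc, smul_mul_assoc, mul_smul_comm, smul_smul]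
  congr 1
  rw [← ofReal_mul, ← mul_inv, Real.mul_self_sqrt hd.le]

set_option maxHeartbeats 2000000 in
private lemma final (ℓ : ℝ) (hℓ : 0 < ℓ) (x v : EuclideanSpace ℝ (Fin 3)) :
    (Hmap ℓ x)⁻¹ * fderiv ℝ (Hmap ℓ) x v =
      (2 * (ℓ : ℂ) * I / ((ℓ ^ 2 + ‖x‖ ^ 2 : ℝ) : ℂ)) •
        ((Gmap ℓ x)⁻¹ * pauliVec v * Gmap ℓ x) := by
  have hd : (0:ℝ) < ℓ ^ 2 + ‖x‖ ^ 2 := by positivity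
  have hdC : ((ℓ:ℂ) ^ 2 + (‖x‖:ℂ) ^ 2) ≠ 0 := by
    have : ((ℓ ^ 2 + ‖x‖ ^ 2 : ℝ) : ℂ) ≠ 0 := ofReal_ne_zero.mpr hd.ne'
    push_cast at this
    exact this
  have I2 : I ^ 2 = -1 := Complex.I_sq
  have I3 : I ^ 3 = -I := by rw [pow_succ, I2]; ring
  have I4 : I ^ 4 = 1 := by rw [pow_succ, I3]; simp [Complex.I_mul_I]
  have hQP := anticomm' x v
  have hPQP : pauliVec x * pauliVec v * pauliVec x
      = ((2 * (inner ℝ x v : ℝ) : ℝ) : ℂ) • pauliVec x - ((‖x‖ ^ 2 : ℝ) : ℂ) • pauliVec v := by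
    rw [mul_assoc, anticomm' x v, mul_sub, mul_smul_comm, mul_one, ← mul_assoc,
      pauliVec_sq, smul_mul_assoc, one_mul]
  rw [Hinv ℓ hℓ x, fderiv_Hmap_apply ℓ hℓ x v, Gconj ℓ hℓ x v]
  simp only [add_mul, mul_add, sub_mul, mul_sub, smul_mul_assoc, mul_smul_comm,
    smul_smul, mul_one, one_mul, smul_add, smul_sub, pauliVec_sq, hPQP, hQP]
  match_scalars <;>
    · push_cast
      field_simp [hdC]
      try ring_nf
      try simp only [I2, I3, I4]
      try ring_nf
      try ring

/-- H⁻¹ dH = (2iℓ/(ℓ² + r²))·G⁻¹ (v·τ) G. -/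
theorem Hinv_dH_eq_conj_pauliVec (ℓ : ℝ) (hℓ : 0 < ℓ) (x v : EuclideanSpace ℝ (Fin 3)) :
    (Hmap ℓ x)⁻¹ * fderiv ℝ (Hmap ℓ) x v =
      (2 * (ℓ : ℂ) * I / ((ℓ ^ 2 + ‖x‖ ^ 2 : ℝ) : ℂ)) •
        ((Gmap ℓ x)⁻¹ * pauliVec v * Gmap ℓ x) := by
  exact final ℓ hℓ x v
end
end

section
/- For every x ∈ ℝ³, the matrix cancellation identity Σ_{j=1}^{3} τⱼ·( (1/2)·(G(x)⁻¹·∂ⱼG(x) − ∂ⱼG(x)·G(x)⁻¹) + (∂ⱼΩ(x)/Ω(x))·I ) = 0 holds in M₂(ℂ), where ∂ⱼ denotes the partial derivative in the j-th coordinate direction. (This is the identity which makes the conformally rescaled Dirac operator on ℝ³ agree with the pull-back of the Dirac operator on the 3-sphere.) -/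
open Matrix Complex

noncomputable section

attribute [local instance] Matrix.normedAddCommGroup Matrix.normedSpace

/-- The conformal factor Ω(x) = (ℓ² + r²)/(4ℓ). -/
def Omap (ℓ : ℝ) (x : EuclideanSpace ℝ (Fin 3)) : ℝ := (ℓ ^ 2 + ‖x‖ ^ 2) / (4 * ℓ)

section Aux

local notation "E3" => EuclideanSpace ℝ (Fin 3)
local notation "M2" => Matrix (Fin 2) (Fin 2) ℂ

lemma norm_sq_eq (x : E3) : ‖x‖ ^ 2 = x 0 ^ 2 + x 1 ^ 2 + x 2 ^ 2 := by
  rw [EuclideanSpace.norm_eq, Real.sq_sqrt (by positivity)]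
  simp [Fin.sum_univ_three, sq]

/-- pauliVec as a continuous linear map. -/
def pauliCLM : E3 →L[ℝ] M2 :=
  ∑ j : Fin 3, (EuclideanSpace.proj j : E3 →L[ℝ] ℝ).smulRight (I • pauli j)

lemma pauliCLM_apply (v : E3) : pauliCLM v = I • pauliVec v := by
  simp only [pauliCLM, pauliVec, ContinuousLinearMap.sum_apply, Fin.sum_univ_three,
    ContinuousLinearMap.add_apply,
    ContinuousLinearMap.smulRight_apply, PiLp.proj_apply,
    smul_add, ← Complex.coe_smul, smul_comm (_ : ℝ) I]

lemma pauliCLM_single (j : Fin 3) : pauliCLM (EuclideanSpace.single j 1) = I • pauli j := by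
  simp [pauliCLM, ContinuousLinearMap.sum_apply, EuclideanSpace.single_apply,
    Finset.sum_ite_eq' (Finset.univ : Finset (Fin 3)) j]

lemma I_cubed : I ^ 3 = -I := by
  rw [show (3:ℕ) = 2+1 from rfl, pow_succ, Complex.I_sq, neg_one_mul]

lemma BC_eq (ℓ : ℝ) (x : E3) :
    ((ℓ : ℂ) • (1 : M2) + I • pauliVec x) * ((ℓ : ℂ) • (1 : M2) - I • pauliVec x)
      = (((ℓ ^ 2 + ‖x‖ ^ 2 : ℝ) : ℂ)) • (1 : M2) := by
  have h := norm_sq_eq x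
  ext i j
  fin_cases i <;> fin_cases j <;>
    simp [pauli, pauliVec, Matrix.mul_apply, Fin.sum_univ_two, Matrix.one_apply, h] <;>
    push_cast <;> ring_nf <;> simp [Complex.I_sq, Complex.I_pow_four] <;> push_cast <;> ring_nf

lemma CB_eq (ℓ : ℝ) (x : E3) :
    ((ℓ : ℂ) • (1 : M2) - I • pauliVec x) * ((ℓ : ℂ) • (1 : M2) + I • pauliVec x)
      = (((ℓ ^ 2 + ‖x‖ ^ 2 : ℝ) : ℂ)) • (1 : M2) := by
  have h := norm_sq_eq x
  ext i j
  fin_cases i <;> fin_cases j <;>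
    simp [pauli, pauliVec, Matrix.mul_apply, Fin.sum_univ_two, Matrix.one_apply, h] <;>
    push_cast <;> ring_nf <;> simp [Complex.I_sq, Complex.I_pow_four] <;> push_cast <;> ring_nf

lemma Gmap_inv (ℓ : ℝ) (hℓ : 0 < ℓ) (x : E3) :
    (Gmap ℓ x)⁻¹ = (((Real.sqrt (ℓ ^ 2 + ‖x‖ ^ 2))⁻¹ : ℝ) : ℂ) •
      ((ℓ : ℂ) • (1 : M2) - I • pauliVec x) := by
  have ht : (0 : ℝ) < ℓ ^ 2 + ‖x‖ ^ 2 := by positivity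
  apply Matrix.inv_eq_right_inv
  rw [Gmap, smul_mul_assoc, mul_smul_comm, BC_eq, smul_smul, smul_smul]
  have h1 : ((Real.sqrt (ℓ ^ 2 + ‖x‖ ^ 2))⁻¹ * (Real.sqrt (ℓ ^ 2 + ‖x‖ ^ 2))⁻¹
      * (ℓ ^ 2 + ‖x‖ ^ 2) : ℝ) = 1 := by
    rw [← mul_inv, Real.mul_self_sqrt ht.le, inv_mul_cancel₀ ht.ne']
  rw [show ((((Real.sqrt (ℓ ^ 2 + ‖x‖ ^ 2))⁻¹ : ℝ) : ℂ) * ((Real.sqrt (ℓ ^ 2 + ‖x‖ ^ 2))⁻¹ : ℝ))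
      * ((ℓ ^ 2 + ‖x‖ ^ 2 : ℝ) : ℂ)
      = (((Real.sqrt (ℓ ^ 2 + ‖x‖ ^ 2))⁻¹ * (Real.sqrt (ℓ ^ 2 + ‖x‖ ^ 2))⁻¹
        * (ℓ ^ 2 + ‖x‖ ^ 2) : ℝ) : ℂ) by push_cast; ring]
  rw [h1, Complex.ofReal_one, one_smul]

lemma hasFDerivAt_Gmap (ℓ : ℝ) (hℓ : 0 < ℓ) (x : E3) :
    HasFDerivAt (Gmap ℓ)
      ((((Real.sqrt (ℓ ^ 2 + ‖x‖ ^ 2))⁻¹ : ℝ) : ℂ) • pauliCLM +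
        (Complex.ofRealCLM.comp
          (((-(1 / (2 * Real.sqrt (ℓ ^ 2 + ‖x‖ ^ 2))) / Real.sqrt (ℓ ^ 2 + ‖x‖ ^ 2) ^ 2 : ℝ))
              • (2 • (innerSL ℝ x)))).smulRight
          ((ℓ : ℂ) • (1 : M2) + I • pauliVec x)) x := by
  have ht : (0 : ℝ) < ℓ ^ 2 + ‖x‖ ^ 2 := by positivity
  have hs : (0 : ℝ) < Real.sqrt (ℓ ^ 2 + ‖x‖ ^ 2) := Real.sqrt_pos.2 ht
  have hn : HasFDerivAt (fun y : E3 => ℓ ^ 2 + ‖y‖ ^ 2) (2 • (innerSL ℝ x)) x := by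
    simpa using ((hasFDerivAt_id x).norm_sq).const_add (ℓ ^ 2)
  have hsqrt : HasDerivAt (fun t : ℝ => (Real.sqrt t)⁻¹)
      (-(1 / (2 * Real.sqrt (ℓ ^ 2 + ‖x‖ ^ 2))) / Real.sqrt (ℓ ^ 2 + ‖x‖ ^ 2) ^ 2)
      (ℓ ^ 2 + ‖x‖ ^ 2) :=
    (Real.hasDerivAt_sqrt ht.ne').inv hs.ne'
  have hscal : HasFDerivAt (fun y : E3 => (Real.sqrt (ℓ ^ 2 + ‖y‖ ^ 2))⁻¹)
      ((-(1 / (2 * Real.sqrt (ℓ ^ 2 + ‖x‖ ^ 2))) / Real.sqrt (ℓ ^ 2 + ‖x‖ ^ 2) ^ 2 : ℝ)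
        • (2 • (innerSL ℝ x))) x :=
    by have := hsqrt.comp_hasFDerivAt x hn; exact this
  have hc : HasFDerivAt (fun y : E3 => (((Real.sqrt (ℓ ^ 2 + ‖y‖ ^ 2))⁻¹ : ℝ) : ℂ))
      (Complex.ofRealCLM.comp
        ((-(1 / (2 * Real.sqrt (ℓ ^ 2 + ‖x‖ ^ 2))) / Real.sqrt (ℓ ^ 2 + ‖x‖ ^ 2) ^ 2 : ℝ)
          • (2 • (innerSL ℝ x)))) x :=
    Complex.ofRealCLM.hasFDerivAt.comp x hscal
  have hB : HasFDerivAt (fun y : E3 => (ℓ : ℂ) • (1 : M2) + I • pauliVec y) pauliCLM x := by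
    have : HasFDerivAt (fun y : E3 => (ℓ : ℂ) • (1 : M2) + pauliCLM y) pauliCLM x :=
      (pauliCLM.hasFDerivAt).const_add _
    refine this.congr_of_eventuallyEq (Filter.Eventually.of_forall fun y => ?_)
    simp only [pauliCLM_apply]
  have := hc.smul hB
  refine this.congr_of_eventuallyEq (Filter.Eventually.of_forall fun y => ?_)
  rfl

lemma fderiv_Gmap_single (ℓ : ℝ) (hℓ : 0 < ℓ) (x : E3) (j : Fin 3) :
    fderiv ℝ (Gmap ℓ) x (EuclideanSpace.single j 1) =
      (((Real.sqrt (ℓ ^ 2 + ‖x‖ ^ 2))⁻¹ : ℝ) : ℂ) • (I • pauli j) +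
      (((-(1 / (2 * Real.sqrt (ℓ ^ 2 + ‖x‖ ^ 2))) / Real.sqrt (ℓ ^ 2 + ‖x‖ ^ 2) ^ 2)
            * (2 * x j) : ℝ) : ℂ) • ((ℓ : ℂ) • (1 : M2) + I • pauliVec x) := by
  rw [(hasFDerivAt_Gmap ℓ hℓ x).fderiv]
  have hinner : (innerSL ℝ x) (EuclideanSpace.single j 1) = x j := by
    simp [EuclideanSpace.inner_single_right]
  simp only [ContinuousLinearMap.add_apply, ContinuousLinearMap.coe_smul',
    Pi.smul_apply, pauliCLM_single, ContinuousLinearMap.smulRight_apply,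
    ContinuousLinearMap.comp_apply, ContinuousLinearMap.smul_apply, hinner,
    Complex.ofRealCLM_apply, smul_eq_mul]
  norm_num [nsmul_eq_mul]

lemma fderiv_Omap_single (ℓ : ℝ) (hℓ : 0 < ℓ) (x : E3) (j : Fin 3) :
    fderiv ℝ (Omap ℓ) x (EuclideanSpace.single j 1) = x j / (2 * ℓ) := by
  have hn : HasFDerivAt (fun y : E3 => ℓ ^ 2 + ‖y‖ ^ 2) (2 • (innerSL ℝ x)) x := by
    simpa using ((hasFDerivAt_id x).norm_sq).const_add (ℓ ^ 2)
  have hO : HasFDerivAt (Omap ℓ) ((4 * ℓ)⁻¹ • (2 • (innerSL ℝ x))) x := by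
    have h2 := hn.const_mul ((4 * ℓ)⁻¹)
    refine h2.congr_of_eventuallyEq (Filter.Eventually.of_forall fun y => ?_)
    simp [Omap, div_eq_inv_mul]
  rw [hO.fderiv]
  have hinner : (innerSL ℝ x) (EuclideanSpace.single j 1) = x j := by
    simp [EuclideanSpace.inner_single_right]
  simp only [ContinuousLinearMap.coe_smul', Pi.smul_apply, ContinuousLinearMap.smul_apply,
    hinner, smul_eq_mul]
  field_simp
  ring

/-- Pure matrix identity: the heart of the cancellation. -/
lemma main_identity (ℓ : ℝ) (x : E3) :
    (∑ j : Fin 3, pauli j *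
        ((1 / 2 : ℂ) •
            (((ℓ : ℂ) • (1 : M2) - I • pauliVec x) * (I • pauli j) -
              (I • pauli j) * ((ℓ : ℂ) • (1 : M2) - I • pauliVec x)) +
          ((2 * x j : ℝ) : ℂ) • (1 : M2))) = 0 := by
  rw [Fin.sum_univ_three]
  ext i k
  fin_cases i <;> fin_cases k <;>
    simp [pauli, pauliVec, Matrix.mul_apply, Fin.sum_univ_two, Matrix.one_apply,
      Matrix.vecMul, dotProduct, Matrix.vecHead, Matrix.vecTail] <;>
    push_cast <;> ring_nf <;> simp [Complex.I_sq, Complex.I_pow_four, I_cubed] <;> push_cast <;> ring_nf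

lemma commutator_helper {R A : Type*} [CommRing R] [Ring A] [Algebra R A]
    (s e t : R) (C B T τ : A) (hCB : C * B = T) (hBC : B * C = T) (hss : s * s = t) :
    (s • C) * (s • τ + e • B) - (s • τ + e • B) * (s • C) = t • (C * τ - τ * C) := by
  simp only [mul_add, add_mul, smul_mul_assoc, mul_smul_comm, smul_smul, hCB, hBC, ← hss]
  module

end Aux

/-- the cancellation identity
Σⱼ τⱼ·((1/2)(G⁻¹∂ⱼG − ∂ⱼG G⁻¹) + (∂ⱼΩ/Ω)·I) = 0. -/
theorem dirac_conformal_cancellation (ℓ : ℝ) (hℓ : 0 < ℓ) (x : EuclideanSpace ℝ (Fin 3)) :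
    (∑ j : Fin 3,
        pauli j *
          ((1 / 2 : ℂ) •
              ((Gmap ℓ x)⁻¹ * fderiv ℝ (Gmap ℓ) x (EuclideanSpace.single j 1) -
                fderiv ℝ (Gmap ℓ) x (EuclideanSpace.single j 1) * (Gmap ℓ x)⁻¹) +
            ((fderiv ℝ (Omap ℓ) x (EuclideanSpace.single j 1) / Omap ℓ x : ℝ) : ℂ) •
              (1 : Matrix (Fin 2) (Fin 2) ℂ))) = 0 := by
  have ht : (0 : ℝ) < ℓ ^ 2 + ‖x‖ ^ 2 := by positivity
  have hss : (((Real.sqrt (ℓ ^ 2 + ‖x‖ ^ 2))⁻¹ : ℝ) : ℂ) *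
      (((Real.sqrt (ℓ ^ 2 + ‖x‖ ^ 2))⁻¹ : ℝ) : ℂ) = (((ℓ ^ 2 + ‖x‖ ^ 2)⁻¹ : ℝ) : ℂ) := by
    rw [← Complex.ofReal_mul, ← mul_inv, Real.mul_self_sqrt ht.le]
  have key : ∀ j : Fin 3,
      pauli j *
          ((1 / 2 : ℂ) •
              ((Gmap ℓ x)⁻¹ * fderiv ℝ (Gmap ℓ) x (EuclideanSpace.single j 1) -
                fderiv ℝ (Gmap ℓ) x (EuclideanSpace.single j 1) * (Gmap ℓ x)⁻¹) +
            ((fderiv ℝ (Omap ℓ) x (EuclideanSpace.single j 1) / Omap ℓ x : ℝ) : ℂ) •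
              (1 : Matrix (Fin 2) (Fin 2) ℂ)) =
        (((ℓ ^ 2 + ‖x‖ ^ 2)⁻¹ : ℝ) : ℂ) •
          (pauli j *
            ((1 / 2 : ℂ) •
                (((ℓ : ℂ) • (1 : Matrix (Fin 2) (Fin 2) ℂ) - I • pauliVec x) * (I • pauli j) -
                  (I • pauli j) *
                    ((ℓ : ℂ) • (1 : Matrix (Fin 2) (Fin 2) ℂ) - I • pauliVec x)) +
              ((2 * x j : ℝ) : ℂ) • (1 : Matrix (Fin 2) (Fin 2) ℂ))) := by
    intro j
    rw [Gmap_inv ℓ hℓ x, fderiv_Gmap_single ℓ hℓ x j, fderiv_Omap_single ℓ hℓ x j]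
    rw [commutator_helper _ _ _ _ _ ((((ℓ ^ 2 + ‖x‖ ^ 2) : ℝ) : ℂ) • 1) _
      (CB_eq ℓ x) (BC_eq ℓ x) hss]
    have hratio : (x j / (2 * ℓ) / Omap ℓ x : ℝ) = (ℓ ^ 2 + ‖x‖ ^ 2)⁻¹ * (2 * x j) := by
      rw [Omap]
      field_simp
      ring
    rw [hratio, Complex.ofReal_mul, ← smul_smul,
      smul_comm ((1 : ℂ) / 2) (((ℓ ^ 2 + ‖x‖ ^ 2)⁻¹ : ℝ) : ℂ), ← smul_add, mul_smul_comm]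
  calc _ = ∑ j : Fin 3, (((ℓ ^ 2 + ‖x‖ ^ 2)⁻¹ : ℝ) : ℂ) •
          (pauli j *
            ((1 / 2 : ℂ) •
                (((ℓ : ℂ) • (1 : Matrix (Fin 2) (Fin 2) ℂ) - I • pauliVec x) * (I • pauli j) -
                  (I • pauli j) *
                    ((ℓ : ℂ) • (1 : Matrix (Fin 2) (Fin 2) ℂ) - I • pauliVec x)) +
              ((2 * x j : ℝ) : ℂ) • (1 : Matrix (Fin 2) (Fin 2) ℂ))) :=
        Finset.sum_congr rfl fun j _ => key j
    _ = 0 := by rw [← Finset.smul_sum, main_identity, smul_zero]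
end
end
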